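/- arXiv:1905.13336 — 2 statements merged into one kernel-verified Lean document; each statement's English description precedes it below -/
import Mathlib

section
/- Let c > 1, k > 0, and a, b ≥ 0 not both zero. The function X̂_t = a − (1/log c)·log( (c^b − 1 + c^{−kt}(1 − c^{−a})) / (c^b − c^{−a}) ) satisfies X̂_0 = a and dX̂_t/dt = k(1 − c^{X̂_t})/(1 − c^{a+b+kt}) for all t ≥ 0, and is the unique solution of this initial value problem on [0,∞). -/
/-- `X̂_t = a − (1/log c) log((c^b − 1 + c^{−kt}(1 − c^{−a}))/(c^b − c^{−a}))`. -/
noncomputable def Xhat (c k a b t : ℝ) : ℝ :=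
  a - (1 / Real.log c) *
    Real.log ((c ^ b - 1 + c ^ (-(k * t)) * (1 - c ^ (-a))) / (c ^ b - c ^ (-a)))

noncomputable def Nfun (c k a b t : ℝ) : ℝ :=
  c ^ b - 1 + c ^ (-(k * t)) * (1 - c ^ (-a))

noncomputable def Aval (c a b : ℝ) : ℝ := c ^ b - c ^ (-a)

lemma Xhat_eq (c k a b t : ℝ) :
    Xhat c k a b t = a - (1 / Real.log c) * Real.log (Nfun c k a b t / Aval c a b) := rfl

lemma A_pos (c a b : ℝ) (hc : 1 < c) (hab : 0 < a + b) : 0 < Aval c a b := by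
  have : c ^ (-a) < c ^ b := (Real.rpow_lt_rpow_left_iff hc).mpr (by linarith)
  simpa [Aval] using sub_pos.mpr this

lemma N_pos (c k a b t : ℝ) (hc : 1 < c) (ha : 0 ≤ a) (hb : 0 ≤ b) (hab : 0 < a + b) :
    0 < Nfun c k a b t := by
  have hc0 : (0:ℝ) < c := lt_trans one_pos hc
  have h1 : (0:ℝ) < c ^ (-(k * t)) := Real.rpow_pos_of_pos hc0 _
  have h2 : c ^ (-a) ≤ 1 := Real.rpow_le_one_of_one_le_of_nonpos hc.le (by linarith)
  have h3 : (1:ℝ) ≤ c ^ b := Real.one_le_rpow hc.le hb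
  rcases lt_or_eq_of_le hb with hb' | hb'
  · have : (1:ℝ) < c ^ b := Real.one_lt_rpow_iff_of_pos hc0 |>.mpr (Or.inl ⟨hc, hb'⟩)
    have : 0 < c ^ b - 1 := by linarith
    have h4 : 0 ≤ c ^ (-(k*t)) * (1 - c ^ (-a)) := mul_nonneg h1.le (by linarith)
    unfold Nfun; linarith
  · have ha' : 0 < a := by linarith
    have : c ^ (-a) < 1 := Real.rpow_lt_one_of_one_lt_of_neg hc (by linarith)
    have h4 : 0 < c ^ (-(k*t)) * (1 - c ^ (-a)) := mul_pos h1 (by linarith)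
    unfold Nfun; linarith

lemma hasDerivAt_cpow_lin (c k : ℝ) (hc : 1 < c) (t : ℝ) :
    HasDerivAt (fun t : ℝ => c ^ (-(k * t))) (c ^ (-(k * t)) * (Real.log c * -k)) t := by
  have hc0 : (0:ℝ) < c := lt_trans one_pos hc
  have h1 : HasDerivAt (fun t : ℝ => Real.log c * -(k * t)) (Real.log c * -k) t := by
    simpa using (((hasDerivAt_id t).const_mul k).neg.const_mul (Real.log c))
  have h2 := h1.exp
  simpa [Real.rpow_def_of_pos hc0] using h2

lemma hasDerivAt_N (c k a b : ℝ) (hc : 1 < c) (t : ℝ) :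
    HasDerivAt (fun t => Nfun c k a b t)
      (c ^ (-(k * t)) * (Real.log c * -k) * (1 - c ^ (-a))) t := by
  unfold Nfun
  exact ((hasDerivAt_cpow_lin c k hc t).mul_const _).const_add _

lemma cpow_Xhat (c k a b t : ℝ) (hc : 1 < c) (ha : 0 ≤ a) (hb : 0 ≤ b) (hab : 0 < a + b) :
    c ^ Xhat c k a b t = c ^ a * (Aval c a b / Nfun c k a b t) := by
  have hc0 : (0:ℝ) < c := lt_trans one_pos hc
  have hL : Real.log c ≠ 0 := ne_of_gt (Real.log_pos hc)
  rw [Xhat_eq, Real.rpow_def_of_pos hc0]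
  have h1 : Real.log c * (a - 1 / Real.log c * Real.log (Nfun c k a b t / Aval c a b))
      = Real.log c * a - Real.log (Nfun c k a b t / Aval c a b) := by
    field_simp
  rw [h1, Real.exp_sub, Real.exp_log (div_pos (N_pos c k a b t hc ha hb hab) (A_pos c a b hc hab)),
    Real.rpow_def_of_pos hc0]
  rw [div_div_eq_mul_div, mul_div_assoc]


lemma sigma_lt (c k a b t : ℝ) (hc : 1 < c) (hk : 0 < k) (hab : 0 < a + b) (ht : 0 ≤ t) :
    1 - c ^ (a + b + k * t) < 0 := by
  have hc0 : (0:ℝ) < c := lt_trans one_pos hc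
  have : (1:ℝ) < c ^ (a + b + k * t) :=
    (Real.one_lt_rpow_iff_of_pos hc0).mpr (Or.inl ⟨hc, by nlinarith⟩)
  linarith

lemma alg_main (p q r L N k : ℝ) (hp : p ≠ 0) (hr : r ≠ 0) (hL : L ≠ 0)
    (hN : N = q - 1 + r⁻¹ * (1 - p⁻¹)) (hN0 : N ≠ 0) (hS0 : 1 - p * q * r ≠ 0) :
    k * (1 - p * ((q - p⁻¹) / N)) / (1 - p * q * r)
      = -(1 / L * (r⁻¹ * (L * -k) * (1 - p⁻¹) / N)) := by
  have h1 : -(1 / L * (r⁻¹ * (L * -k) * (1 - p⁻¹) / N)) = k * (r⁻¹ * (1 - p⁻¹)) / N := by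
    field_simp
  rw [h1]
  have h2 : k * (1 - p * ((q - p⁻¹) / N)) = k * (N - p * (q - p⁻¹)) / N := by
    field_simp
  rw [h2, div_div, div_eq_div_iff (mul_ne_zero hN0 hS0) hN0]
  have h3 : p * r * N = p * r * (q - 1) + p - 1 := by
    rw [hN]; field_simp; ring
  field_simp
  linear_combination k * h3

lemma hasDerivAt_Xhat (c k a b : ℝ) (hc : 1 < c) (hk : 0 < k) (ha : 0 ≤ a) (hb : 0 ≤ b)
    (hab : 0 < a + b) (t : ℝ) (ht : 0 ≤ t) :
    HasDerivAt (fun t => Xhat c k a b t)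
      (k * (1 - c ^ Xhat c k a b t) / (1 - c ^ (a + b + k * t))) t := by
  have hc0 : (0:ℝ) < c := lt_trans one_pos hc
  have hL : 0 < Real.log c := Real.log_pos hc
  have hN := N_pos c k a b t hc ha hb hab
  have hA := A_pos c a b hc hab
  have hXf : (fun t => Xhat c k a b t)
      = fun t => a - (1 / Real.log c) * (Real.log (Nfun c k a b t) - Real.log (Aval c a b)) := by
    funext s
    rw [Xhat_eq, Real.log_div (ne_of_gt (N_pos c k a b s hc ha hb hab)) (ne_of_gt hA)]
  rw [hXf]
  have hd : HasDerivAt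
      (fun t => a - (1 / Real.log c) * (Real.log (Nfun c k a b t) - Real.log (Aval c a b)))
      (-((1 / Real.log c) *
        (c ^ (-(k * t)) * (Real.log c * -k) * (1 - c ^ (-a)) / Nfun c k a b t))) t := by
    exact ((((hasDerivAt_N c k a b hc t).log (ne_of_gt hN)).sub_const _).const_mul
      (1 / Real.log c)).const_sub a
  convert hd using 1
  rw [cpow_Xhat c k a b t hc ha hb hab]
  -- algebra
  have hS := sigma_lt c k a b t hc hk hab ht
  have hpq : c ^ (a + b + k * t) = c ^ a * c ^ b * c ^ (k * t) := by
    rw [← Real.rpow_add hc0, ← Real.rpow_add hc0]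
  have hrinv : c ^ (-(k * t)) = (c ^ (k * t))⁻¹ := Real.rpow_neg hc0.le _
  have hpinv : c ^ (-a) = (c ^ a)⁻¹ := Real.rpow_neg hc0.le _
  have hp0 : c ^ a ≠ 0 := ne_of_gt (Real.rpow_pos_of_pos hc0 _)
  have hr0 : c ^ (k * t) ≠ 0 := ne_of_gt (Real.rpow_pos_of_pos hc0 _)
  have hN' : Nfun c k a b t = c ^ b - 1 + (c ^ (k*t))⁻¹ * (1 - (c ^ a)⁻¹) := by
    rw [Nfun, hrinv, hpinv]
  have hS0 : 1 - c ^ a * c ^ b * c ^ (k*t) ≠ 0 := by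
    rw [← hpq]; exact ne_of_lt hS
  have hAval : Aval c a b = c ^ b - (c ^ a)⁻¹ := by rw [Aval, hpinv]
  rw [hAval, hpq, hrinv, hpinv]
  exact alg_main (c ^ a) (c ^ b) (c ^ (k*t)) (Real.log c) (Nfun c k a b t) k hp0 hr0
    (ne_of_gt hL) hN' (ne_of_gt hN) hS0

lemma hasDerivAt_negpow (c : ℝ) (hc : 1 < c) (Y : ℝ → ℝ) (d t : ℝ)
    (hY : HasDerivAt Y d t) :
    HasDerivAt (fun s => c ^ (-(Y s))) (c ^ (-(Y t)) * (Real.log c * -d)) t := by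
  have hc0 : (0:ℝ) < c := lt_trans one_pos hc
  have h1 : HasDerivAt (fun s : ℝ => Real.log c * -(Y s)) (Real.log c * -d) t :=
    hY.neg.const_mul _
  have h2 := h1.exp
  simpa [Real.rpow_def_of_pos hc0] using h2

lemma hasDerivAt_negpow_ode (c k a b : ℝ) (hc : 1 < c) (hk : 0 < k) (hab : 0 < a + b)
    (Y : ℝ → ℝ) (t : ℝ) (ht : 0 ≤ t)
    (hY : HasDerivAt Y (k * (1 - c ^ Y t) / (1 - c ^ (a + b + k * t))) t) :
    HasDerivAt (fun s => c ^ (-(Y s)))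
      (-(Real.log c) * k * (c ^ (-(Y t)) - 1) / (1 - c ^ (a + b + k * t))) t := by
  have hc0 : (0:ℝ) < c := lt_trans one_pos hc
  have hS0 : 1 - c ^ (a + b + k * t) ≠ 0 := ne_of_lt (sigma_lt c k a b t hc hk hab ht)
  have h2 := hasDerivAt_negpow c hc Y _ t hY
  convert h2 using 1
  have hu0 : c ^ (Y t) ≠ 0 := ne_of_gt (Real.rpow_pos_of_pos hc0 _)
  have huinv : c ^ (-(Y t)) = (c ^ (Y t))⁻¹ := Real.rpow_neg hc0.le _
  rw [huinv]
  field_simp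

lemma alg2 (L k S rinv P w v : ℝ) (hS : 1 - S ≠ 0) (hkey : rinv * S = P) :
    ((-L * k * (w - 1) / (1 - S) - -L * k * (v - 1) / (1 - S)) * (rinv - P)
      - (w - v) * (rinv * (L * -k))) / (rinv - P) ^ 2 = 0 := by
  have hnum : (-L * k * (w - 1) / (1 - S) - -L * k * (v - 1) / (1 - S)) * (rinv - P)
      - (w - v) * (rinv * (L * -k)) = 0 := by
    field_simp
    linear_combination (L * k * v - L * k * w) * hkey
  rw [hnum, zero_div]

lemma h_neg (c k a b t : ℝ) (hc : 1 < c) (hk : 0 < k) (hab : 0 < a + b) (ht : 0 ≤ t) :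
    c ^ (-(k * t)) - c ^ (a + b) < 0 := by
  have hc0 : (0:ℝ) < c := lt_trans one_pos hc
  have h1 : c ^ (-(k * t)) ≤ 1 :=
    Real.rpow_le_one_of_one_le_of_nonpos hc.le (by nlinarith)
  have h2 : (1:ℝ) < c ^ (a + b) := (Real.one_lt_rpow_iff_of_pos hc0).mpr (Or.inl ⟨hc, hab⟩)
  linarith

lemma key_h (c k a b t : ℝ) (hc : 1 < c) :
    c ^ (-(k * t)) * c ^ (a + b + k * t) = c ^ (a + b) := by
  have hc0 : (0:ℝ) < c := lt_trans one_pos hc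
  rw [← Real.rpow_add hc0]; ring_nf

lemma F_deriv (c k a b : ℝ) (hc : 1 < c) (hk : 0 < k) (ha : 0 ≤ a) (hb : 0 ≤ b)
    (hab : 0 < a + b) (Y Z : ℝ → ℝ) (t : ℝ) (ht : 0 ≤ t)
    (hY : HasDerivAt Y (k * (1 - c ^ Y t) / (1 - c ^ (a + b + k * t))) t)
    (hZ : HasDerivAt Z (k * (1 - c ^ Z t) / (1 - c ^ (a + b + k * t))) t) :
    HasDerivAt (fun s => (c ^ (-(Y s)) - c ^ (-(Z s))) / (c ^ (-(k * s)) - c ^ (a + b))) 0 t := by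
  have hS0 : 1 - c ^ (a + b + k * t) ≠ 0 := ne_of_lt (sigma_lt c k a b t hc hk hab ht)
  have hW := hasDerivAt_negpow_ode c k a b hc hk hab Y t ht hY
  have hV := hasDerivAt_negpow_ode c k a b hc hk hab Z t ht hZ
  have hh : HasDerivAt (fun s : ℝ => c ^ (-(k * s)) - c ^ (a + b))
      (c ^ (-(k * t)) * (Real.log c * -k)) t :=
    (hasDerivAt_cpow_lin c k hc t).sub_const _
  have hh0 : c ^ (-(k * t)) - c ^ (a + b) ≠ 0 := ne_of_lt (h_neg c k a b t hc hk hab ht)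
  have := (hW.sub hV).div hh hh0
  convert this using 1
  · rfl
  · rfl
  · rfl
  exact (alg2 (Real.log c) k (c ^ (a + b + k * t)) (c ^ (-(k * t))) (c ^ (a + b))
    (c ^ (-(Y t))) (c ^ (-(Z t))) hS0 (key_h c k a b t hc)).symm

theorem qpolya_ode (c k a b : ℝ) (hc : 1 < c) (hk : 0 < k) (ha : 0 ≤ a) (hb : 0 ≤ b)
    (hab : 0 < a + b) :
    Xhat c k a b 0 = a ∧
    (∀ t ≥ (0 : ℝ),
      HasDerivAt (fun t => Xhat c k a b t)
        (k * (1 - c ^ Xhat c k a b t) / (1 - c ^ (a + b + k * t))) t) ∧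
    (∀ Y : ℝ → ℝ, Y 0 = a →
      (∀ t ≥ (0 : ℝ), HasDerivAt Y (k * (1 - c ^ Y t) / (1 - c ^ (a + b + k * t))) t) →
      ∀ t ≥ (0 : ℝ), Y t = Xhat c k a b t) := by
  have hc0 : (0:ℝ) < c := lt_trans one_pos hc
  have hL : 0 < Real.log c := Real.log_pos hc
  have hA := A_pos c a b hc hab
  have part1 : Xhat c k a b 0 = a := by
    have hN0 : Nfun c k a b 0 = Aval c a b := by
      unfold Nfun Aval
      simp [Real.rpow_zero]
    rw [Xhat_eq, hN0, div_self (ne_of_gt hA), Real.log_one]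
    ring
  refine ⟨part1, fun t ht => hasDerivAt_Xhat c k a b hc hk ha hb hab t ht, ?_⟩
  intro Y hY0 hYd t ht
  set F : ℝ → ℝ := fun s =>
    (c ^ (-(Y s)) - c ^ (-(Xhat c k a b s))) / (c ^ (-(k * s)) - c ^ (a + b)) with hF
  have hFd : ∀ x ≥ (0:ℝ), HasDerivAt F 0 x := fun x hx =>
    F_deriv c k a b hc hk ha hb hab Y (fun s => Xhat c k a b s) x hx (hYd x hx)
      (hasDerivAt_Xhat c k a b hc hk ha hb hab x hx)
  have hconst : F t = F 0 := by
    rcases eq_or_lt_of_le ht with rfl | ht'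
    · rfl
    · exact constant_of_has_deriv_right_zero
        (fun x hx => (hFd x hx.1).continuousAt.continuousWithinAt)
        (fun x hx => (hFd x hx.1).hasDerivWithinAt) t ⟨ht, le_refl t⟩
  have hF0 : F 0 = 0 := by
    rw [hF]
    simp only [hY0, part1, sub_self, zero_div]
  have hht : c ^ (-(k * t)) - c ^ (a + b) ≠ 0 := ne_of_lt (h_neg c k a b t hc hk hab ht)
  have hnum : c ^ (-(Y t)) = c ^ (-(Xhat c k a b t)) := by
    have := hconst.trans hF0
    rw [hF] at this
    have h2 := (div_eq_zero_iff.mp this).resolve_right hht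
    linarith [sub_eq_zero.mp h2]
  have hlog := congrArg Real.log hnum
  rw [Real.log_rpow hc0, Real.log_rpow hc0] at hlog
  have := mul_right_cancel₀ (ne_of_gt hL) hlog
  linarith
end

section
/- Consider the q-Pólya urn with q > 1, k ≥ 1, starting with r = ∞ white balls and s ∈ ℕ black balls, where a white ball is drawn with probability q^{−b} when b black balls are present (and black with probability 1 − q^{−b}), and k balls of the drawn color are added. Let X_n be the number of white draws in the first n draws. Then P(X_n = x) = q^{−sx} (1 − q^{−k})^{n−x} [ (s/k) + n − x − 1 choose n − x ]_{q^{−k}} · [n]_{q^{−k}}! / [x]_{q^{−k}}! for all x ∈ {0,…,n}. -/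
/-- `urnW q s k n x` is `P(X_n = x)` for the q-Pólya urn with infinitely many white balls
and initially `s` black balls: if `b` black balls are present, a white ball is drawn with
probability `q^{-b}` (and then nothing is added to the finitely many black balls), otherwise
a black is drawn and `k` black balls are added. After `n` draws with `x` whites among them,
there are `s + k(n-x)` black balls. -/
noncomputable def urnW (q : ℝ) (s k : ℕ) : ℕ → ℕ → ℝ
  | 0, x => if x = 0 then 1 else 0
  | n + 1, 0 => urnW q s k n 0 * (1 - q ^ (-((s : ℤ) + (k : ℤ) * (n : ℤ))))
  | n + 1, x + 1 =>
      urnW q s k n (x + 1) *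
          (1 - q ^ (-((s : ℤ) + (k : ℤ) * ((n : ℤ) - ((x : ℤ) + 1))))) +
        urnW q s k n x * q ^ (-((s : ℤ) + (k : ℤ) * ((n : ℤ) - (x : ℤ))))

/-- `[y]_θ = (1 - θ^y)/(1 - θ)` (real power). -/
noncomputable def qnumT (θ y : ℝ) : ℝ := (1 - θ ^ y) / (1 - θ)

/-- The θ-factorial `[n]_θ!`. -/
noncomputable def qfacT (θ : ℝ) (n : ℕ) : ℝ := ∏ j ∈ Finset.Icc 1 n, qnumT θ (j : ℝ)

/-- The θ-binomial coefficient `[y choose n]_θ`. -/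
noncomputable def qbinomT (θ y : ℝ) (n : ℕ) : ℝ :=
  (∏ i ∈ Finset.range n, qnumT θ (y - (i : ℝ))) / qfacT θ n

lemma urnW_zero_of_lt (q : ℝ) (s k : ℕ) : ∀ n x : ℕ, n < x → urnW q s k n x = 0 := by
  intro n
  induction n with
  | zero =>
    intro x hx
    match x, hx with
    | x + 1, _ => simp [urnW]
  | succ n ih =>
    intro x hx
    match x, hx with
    | x + 1, hx =>
      have h1 : urnW q s k n (x + 1) = 0 := ih _ (by omega)
      have h2 : urnW q s k n x = 0 := ih _ (by omega)
      simp [urnW, h1, h2]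

lemma zpow_eq_theta_rpow (q : ℝ) (hq : 0 < q) (k s : ℕ) (hk : k ≠ 0) (m : ℕ) :
    q ^ (-((s : ℤ) + (k : ℤ) * (m : ℤ))) =
      (q ^ (-(k : ℤ))) ^ ((s : ℝ) / (k : ℝ) + (m : ℝ)) := by
  have hkR : (k : ℝ) ≠ 0 := Nat.cast_ne_zero.2 hk
  rw [← Real.rpow_intCast q (-((s : ℤ) + (k : ℤ) * (m : ℤ)))]
  conv_rhs => rw [← Real.rpow_intCast q (-(k : ℤ))]
  rw [← Real.rpow_mul hq.le]
  congr 1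
  push_cast
  field_simp

lemma qnum_add {θ : ℝ} (hθ : 0 < θ) (a b : ℝ) :
    qnumT θ (a + b) = qnumT θ a + θ ^ a * qnumT θ b := by
  unfold qnumT
  rw [Real.rpow_add hθ, mul_div_assoc', ← add_div]
  congr 1
  ring

lemma prod_qnum_succ (θ : ℝ) (a : ℝ) (m : ℕ) :
    ∏ i ∈ Finset.range (m + 1), qnumT θ (a - (i : ℝ)) =
      qnumT θ a * ∏ i ∈ Finset.range m, qnumT θ (a - 1 - (i : ℝ)) := by
  rw [Finset.prod_range_succ']
  simp only [Nat.cast_zero, sub_zero, Nat.cast_add, Nat.cast_one]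
  rw [mul_comm]
  congr 1
  apply Finset.prod_congr rfl
  intro i _
  congr 1
  ring

lemma qfacT_succ (θ : ℝ) (m : ℕ) :
    qfacT θ (m + 1) = qfacT θ m * qnumT θ ((m : ℝ) + 1) := by
  unfold qfacT
  rw [Finset.prod_Icc_succ_top (by omega : 1 ≤ m + 1)]
  push_cast
  ring

lemma qnumT_pos {θ : ℝ} (hθ0 : 0 < θ) (hθ1 : θ < 1) {y : ℝ} (hy : 0 < y) :
    0 < qnumT θ y := by
  have h1 : θ ^ y < 1 := Real.rpow_lt_one hθ0.le hθ1 hy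
  have h2 : 0 < 1 - θ := sub_pos.2 hθ1
  have h3 : 0 < 1 - θ ^ y := sub_pos.2 h1
  unfold qnumT
  exact div_pos h3 h2

lemma qfacT_pos {θ : ℝ} (hθ0 : 0 < θ) (hθ1 : θ < 1) (m : ℕ) : 0 < qfacT θ m := by
  unfold qfacT
  apply Finset.prod_pos
  intro j hj
  have : 1 ≤ j := (Finset.mem_Icc.1 hj).1
  exact qnumT_pos hθ0 hθ1 (by exact_mod_cast this : (0:ℝ) < j)

lemma urnW_pmf_aux (q : ℝ) (hq : 1 < q) (k s : ℕ) (hk : 1 ≤ k) :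
    ∀ n x : ℕ, x ≤ n →
      urnW q s k n x =
        q ^ (-((s : ℤ) * (x : ℤ))) * (1 - q ^ (-(k : ℤ))) ^ (n - x) *
          qbinomT (q ^ (-(k : ℤ))) ((s : ℝ) / (k : ℝ) + ((n - x : ℕ) : ℝ) - 1) (n - x) *
          (qfacT (q ^ (-(k : ℤ))) n / qfacT (q ^ (-(k : ℤ))) x) := by
  have hq0 : (0 : ℝ) < q := lt_trans one_pos hq
  set θ : ℝ := q ^ (-(k : ℤ)) with hθdef
  have hθ0 : 0 < θ := zpow_pos hq0 _
  have hθ1 : θ < 1 := by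
    have hk0 : (0 : ℤ) < (k : ℤ) := by exact_mod_cast hk
    exact zpow_lt_one_of_neg₀ hq (by omega)
  have h1θ : (1 : ℝ) - θ ≠ 0 := (sub_pos.2 hθ1).ne'
  have hfac : ∀ m : ℕ, qfacT θ m ≠ 0 := fun m => (qfacT_pos hθ0 hθ1 m).ne'
  have hnum : ∀ m : ℕ, qnumT θ ((m : ℝ) + 1) ≠ 0 := fun m =>
    (qnumT_pos hθ0 hθ1 (by positivity)).ne'
  set σ : ℝ := (s : ℝ) / (k : ℝ) with hσdef
  have hbridge : ∀ m : ℕ, 1 - q ^ (-((s : ℤ) + (k : ℤ) * (m : ℤ))) =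
      (1 - θ) * qnumT θ (σ + (m : ℝ)) := by
    intro m
    rw [zpow_eq_theta_rpow q hq0 k s (by omega) m, qnumT, mul_div_cancel₀ _ h1θ]
  intro n
  induction n with
  | zero =>
    intro x hx
    interval_cases x
    simp [urnW, qbinomT, qfacT]
  | succ n ih =>
    intro x hx
    match x with
    | 0 =>
      have e1 : urnW q s k (n + 1) 0 =
          urnW q s k n 0 * (1 - q ^ (-((s : ℤ) + (k : ℤ) * (n : ℤ)))) := by
        rw [urnW]
      rw [e1, ih 0 (Nat.zero_le n), hbridge n]
      simp only [Nat.sub_zero]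
      simp only [qbinomT]
      rw [qfacT_succ θ n]
      rw [show σ + ((n + 1 : ℕ) : ℝ) - 1 = (σ + (n : ℝ) - 1) + 1 by push_cast; ring]
      rw [prod_qnum_succ θ (σ + (n : ℝ) - 1 + 1) n]
      rw [show σ + (n : ℝ) - 1 + 1 - 1 = σ + (n : ℝ) - 1 by ring]
      have hq1 : qnumT θ (σ + (n : ℝ)) = qnumT θ (σ + (n : ℝ) - 1 + 1) := by norm_num
      rw [← hq1]
      generalize (∏ i ∈ Finset.range n, qnumT θ (σ + (n : ℝ) - 1 - (i : ℝ))) = P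
      generalize qnumT θ (σ + (n : ℝ)) = A
      generalize hPn : qnumT θ ((n : ℝ) + 1) = N
      have hN : N ≠ 0 := hPn ▸ hnum n
      generalize hF0 : qfacT θ 0 = F0
      generalize hFn : qfacT θ n = F
      have hF0' : F0 ≠ 0 := hF0 ▸ hfac 0
      have hF' : F ≠ 0 := hFn ▸ hfac n
      field_simp
      ring
    | x + 1 =>
      rcases Nat.lt_or_ge (x + 1) (n + 1) with h | h
      · obtain ⟨m, rfl⟩ : ∃ m, n = x + 1 + m := ⟨n - (x + 1), by omega⟩
        have e1 : urnW q s k (x + 1 + m + 1) (x + 1) =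
            urnW q s k (x + 1 + m) (x + 1) * (1 - q ^ (-((s : ℤ) + (k : ℤ) * (m : ℤ)))) +
            urnW q s k (x + 1 + m) x * q ^ (-((s : ℤ) + (k : ℤ) * ((m : ℤ) + 1))) := by
          have c1 : ((x + 1 + m : ℕ) : ℤ) - ((x : ℤ) + 1) = (m : ℤ) := by push_cast; ring
          have c2 : ((x + 1 + m : ℕ) : ℤ) - (x : ℤ) = (m : ℤ) + 1 := by push_cast; ring
          rw [urnW, c1, c2]
        rw [e1, ih (x + 1) (by omega), ih x (by omega)]
        rw [show x + 1 + m - (x + 1) = m from by omega,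
            show x + 1 + m - x = m + 1 from by omega,
            show x + 1 + m + 1 - (x + 1) = m + 1 from by omega]
        rw [hbridge m]
        have e2 : q ^ (-((s : ℤ) + (k : ℤ) * ((m : ℤ) + 1))) =
            q ^ (-((s : ℤ))) * θ ^ (m + 1) := by
          rw [hθdef, ← zpow_natCast (q ^ (-(k : ℤ))) (m + 1), ← zpow_mul,
            ← zpow_add₀ (ne_of_gt hq0)]
          congr 1
          push_cast; ring
        have e4 : q ^ (-((s : ℤ) * ((x : ℤ) + 1))) =
            q ^ (-((s : ℤ) * (x : ℤ))) * q ^ (-(s : ℤ)) := by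
          rw [← zpow_add₀ (ne_of_gt hq0)]
          congr 1
          ring
        have e5 : q ^ (-((s : ℤ) * (((x:ℕ) + 1 : ℕ) : ℤ))) = q ^ (-((s : ℤ) * ((x : ℤ) + 1))) := by
          norm_cast
        have e3 : qnumT θ ((x : ℝ) + (m : ℝ) + 2) =
            qnumT θ ((m : ℝ) + 1) + θ ^ (m + 1) * qnumT θ ((x : ℝ) + 1) := by
          have h4 := qnum_add hθ0 ((m : ℝ) + 1) ((x : ℝ) + 1)
          rw [show ((m : ℝ) + 1) = (((m + 1 : ℕ)) : ℝ) from by push_cast; ring] at h4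
          rw [Real.rpow_natCast] at h4
          rw [show ((x : ℝ) + (m : ℝ) + 2) = (((m + 1 : ℕ) : ℝ)) + ((x : ℝ) + 1)
            from by push_cast; ring, h4]
          push_cast; ring
        simp only [qbinomT]
        rw [show σ + ((m + 1 : ℕ) : ℝ) - 1 = (σ + (m : ℝ) - 1) + 1 from by push_cast; ring]
        rw [prod_qnum_succ θ (σ + (m : ℝ) - 1 + 1) m]
        rw [show σ + (m : ℝ) - 1 + 1 - 1 = σ + (m : ℝ) - 1 from by ring]
        have hqm : qnumT θ (σ + (m : ℝ)) = qnumT θ (σ + (m : ℝ) - 1 + 1) := by norm_num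
        rw [← hqm]
        rw [qfacT_succ θ (x + 1 + m), qfacT_succ θ m, qfacT_succ θ x]
        rw [show ((x + 1 + m : ℕ) : ℝ) + 1 = ((x : ℝ) + (m : ℝ) + 2)
          from by push_cast; ring, e3]
        rw [e2, e5, e4]
        generalize (∏ i ∈ Finset.range m, qnumT θ (σ + (m : ℝ) - 1 - (i : ℝ))) = P
        generalize qnumT θ (σ + (m : ℝ)) = A
        generalize hPx : qnumT θ ((x : ℝ) + 1) = Nx
        generalize hPm : qnumT θ ((m : ℝ) + 1) = Nm
        have hNx : Nx ≠ 0 := hPx ▸ hnum x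
        have hNm : Nm ≠ 0 := hPm ▸ hnum m
        generalize hF1 : qfacT θ m = F1
        generalize hF2 : qfacT θ x = F2
        generalize hF3 : qfacT θ (x + 1 + m) = F3
        have hF1' : F1 ≠ 0 := hF1 ▸ hfac m
        have hF2' : F2 ≠ 0 := hF2 ▸ hfac x
        have hF3' : F3 ≠ 0 := hF3 ▸ hfac (x + 1 + m)
        generalize q ^ (-((s : ℤ) * (x : ℤ))) = Q
        generalize q ^ (-(s : ℤ)) = S
        field_simp
        ring
      · have hxn : x = n := by omega
        subst hxn
        have e1 : urnW q s k (x + 1) (x + 1) =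
            urnW q s k x (x + 1) *
              (1 - q ^ (-((s : ℤ) + (k : ℤ) * ((x : ℤ) - ((x : ℤ) + 1))))) +
            urnW q s k x x * q ^ (-((s : ℤ) + (k : ℤ) * ((x : ℤ) - (x : ℤ)))) := by
          rw [urnW]
        rw [e1, urnW_zero_of_lt q s k x (x + 1) (by omega), zero_mul, zero_add,
          ih x le_rfl]
        simp only [Nat.sub_self]
        rw [show ((x : ℤ) - (x : ℤ)) = 0 from by ring]
        simp only [qbinomT]
        simp only [Finset.range_zero, Finset.prod_empty, pow_zero]
        rw [show (-((s : ℤ) + (k : ℤ) * 0)) = -((s : ℤ) * 1) from by ring]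
        have d1 : q ^ (-((s : ℤ) * (((x : ℕ) + 1 : ℕ) : ℤ))) =
            q ^ (-((s : ℤ) * (x : ℤ))) * q ^ (-((s : ℤ) * 1)) := by
          rw [← zpow_add₀ (ne_of_gt hq0)]
          congr 1
          push_cast; ring
        rw [d1]
        field_simp [hfac 0, hfac x, hfac (x + 1)]

theorem qpolya_infinite_white_pmf (q : ℝ) (hq : 1 < q) (k s : ℕ) (hk : 1 ≤ k)
    (n x : ℕ) (hx : x ≤ n) :
    urnW q s k n x =
      q ^ (-((s : ℤ) * (x : ℤ))) * (1 - q ^ (-(k : ℤ))) ^ (n - x) *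
        qbinomT (q ^ (-(k : ℤ))) ((s : ℝ) / (k : ℝ) + (n : ℝ) - (x : ℝ) - 1) (n - x) *
        (qfacT (q ^ (-(k : ℤ))) n / qfacT (q ^ (-(k : ℤ))) x) := by
  have harg : (s : ℝ) / (k : ℝ) + ((n - x : ℕ) : ℝ) - 1 =
      (s : ℝ) / (k : ℝ) + (n : ℝ) - (x : ℝ) - 1 := by
    rw [Nat.cast_sub hx]; ring
  rw [urnW_pmf_aux q hq k s hk n x hx, harg]
end
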